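/- Let F and G be functors between module categories such that F is left adjoint to G, and suppose for a module N there is a natural isomorphism G(F(N)) ≅ ⊕_{g ∈ G} N^g (a possibly infinite direct sum indexed by a group acting on modules). If M is a finitely generated module, then Hom(F(M), F(N)) ≅ ⊕_{g ∈ G} Hom(M, N^g). -/

import Mathlib

open CategoryTheory DirectSum

section Aux

variable {R : Type} [Ring R] {ι : Type} [DecidableEq ι]
  {M : Type} [AddCommGroup M] [Module R M]
  {A : ι → Type} [∀ i, AddCommGroup (A i)] [∀ i, Module R (A i)]

/-- The canonical additive map `⨁ i, Hom(M, A i) →+ Hom(M, ⨁ i, A i)`. -/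
noncomputable def dsHom : (⨁ i, (M →ₗ[R] A i)) →+ (M →ₗ[R] ⨁ i, A i) :=
  DirectSum.toAddMonoid fun i =>
    { toFun := fun f => (DirectSum.lof R ι A i).comp f
      map_zero' := by ext m; simp
      map_add' := by intro f g; ext m; simp }

lemma dsHom_apply_apply (x : ⨁ i, (M →ₗ[R] A i)) (m : M) (i : ι) :
    (dsHom x) m i = x i m := by
  induction x using DirectSum.induction_on with
  | zero => simp [dsHom]
  | of j f =>
    rw [dsHom, DirectSum.toAddMonoid_of]
    rcases eq_or_ne j i with rfl | h
    · simp [DirectSum.lof_eq_of, DirectSum.of_eq_same]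
    · simp only [AddMonoidHom.coe_mk, ZeroHom.coe_mk, LinearMap.comp_apply,
        DirectSum.lof_eq_of, DirectSum.of_eq_of_ne _ _ _ h.symm, LinearMap.zero_apply]
  | add x y hx hy =>
    simp only [map_add, LinearMap.add_apply, DirectSum.add_apply, hx, hy]

lemma dsHom_injective : Function.Injective (dsHom (R := R) (ι := ι) (M := M) (A := A)) := by
  intro x y hxy
  refine DFinsupp.ext fun i => LinearMap.ext fun m => ?_
  have := congrArg (fun f : M →ₗ[R] ⨁ i, A i => f m i) hxy
  simpa only [dsHom_apply_apply] using this

lemma dsHom_surjective [Module.Finite R M] :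
    Function.Surjective (dsHom (R := R) (ι := ι) (M := M) (A := A)) := by
  intro f
  obtain ⟨s, hs⟩ := (Module.finite_def.mp ‹Module.Finite R M›)
  classical
  -- a finite set of indices containing the supports of the images of the generators
  set T : Finset ι := s.sup fun m => (f m).support with hT
  refine ⟨∑ i ∈ T, DirectSum.of (fun i => M →ₗ[R] A i) i
    ((DirectSum.component R ι A i).comp f), ?_⟩
  -- the set of `m` on which the two maps agree is a submodule containing the generators
  have key : ∀ m : M, (∑ i ∈ T, DirectSum.of A i ((f m) i)) = f m := by
    have hsub : ∀ m ∈ s, (f m).support ⊆ T := fun m hm =>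
      Finset.le_sup (f := fun m => (f m).support) hm
    let S : Submodule R M :=
      { carrier := {m | (∑ i ∈ T, DirectSum.of A i ((f m) i)) = f m}
        zero_mem' := by simp
        add_mem' := by
          intro a b ha hb
          simp only [Set.mem_setOf_eq] at ha hb ⊢
          simp [map_add, DirectSum.add_apply, Finset.sum_add_distrib, ha, hb]
        smul_mem' := by
          intro c a ha
          simp only [Set.mem_setOf_eq] at ha ⊢
          calc (∑ i ∈ T, DirectSum.of A i ((f (c • a)) i))
              = c • ∑ i ∈ T, DirectSum.of A i ((f a) i) := by
                rw [Finset.smul_sum]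
                refine Finset.sum_congr rfl fun i _ => ?_
                rw [map_smul]
                exact (DirectSum.lof R ι A i).map_smul c ((f a) i)
            _ = f (c • a) := by rw [ha, ← map_smul] }
    have hS : ∀ m ∈ s, m ∈ S := by
      intro m hm
      show (∑ i ∈ T, DirectSum.of A i ((f m) i)) = f m
      calc (∑ i ∈ T, DirectSum.of A i ((f m) i))
          = ∑ i ∈ (f m).support, DirectSum.of A i ((f m) i) :=
            (Finset.sum_subset (hsub m hm) (fun i _ hi => by
              rw [DFinsupp.notMem_support_iff.mp hi, map_zero])).symm
        _ = f m := DirectSum.sum_support_of (f m)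
    intro m
    have : m ∈ S := by
      have : Submodule.span R (s : Set M) ≤ S := Submodule.span_le.mpr hS
      exact this (hs ▸ Submodule.mem_top)
    exact this
  ext m i
  rw [map_sum]
  simp only [dsHom, DirectSum.toAddMonoid_of, AddMonoidHom.coe_mk, ZeroHom.coe_mk]
  rw [LinearMap.sum_apply]
  exact DFunLike.congr_fun (key m) i

/-- For `M` finitely generated, `Hom(M, ⨁ A i) ≃+ ⨁ Hom(M, A i)`. -/
noncomputable def dsHomEquiv [Module.Finite R M] :
    (M →ₗ[R] ⨁ i, A i) ≃+ ⨁ i, (M →ₗ[R] A i) :=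
  (AddEquiv.ofBijective dsHom ⟨dsHom_injective, dsHom_surjective⟩).symm

end Aux

/-- Let `F : R-Mod → S-Mod` be an additive functor which is left adjoint
to `Gf : S-Mod → R-Mod`, let `G₀` be a group acting on `R`-modules by `act`, and suppose
that for the module `N` there is an isomorphism `Gf(F(N)) ≅ ⊕_{g ∈ G₀} N^g`.  If `M` is a
finitely generated module, then `Hom(F(M), F(N)) ≅ ⊕_{g ∈ G₀} Hom(M, N^g)`. -/
theorem hom_pushdown_iso_directSum_hom
    (R S : Type) [Ring R] [Ring S]
    (F : ModuleCat.{0} R ⥤ ModuleCat.{0} S) (Gf : ModuleCat.{0} S ⥤ ModuleCat.{0} R)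
    [F.Additive] (adj : F ⊣ Gf)
    (G₀ : Type) [Group G₀] [DecidableEq G₀]
    (act : G₀ → ModuleCat.{0} R → ModuleCat.{0} R)
    (M N : ModuleCat.{0} R)
    (hM : Module.Finite R M)
    (hGFN : Nonempty (Gf.obj (F.obj N) ≅ ModuleCat.of R (⨁ g : G₀, (act g N : Type)))) :
    Nonempty ((F.obj M ⟶ F.obj N) ≃+ ⨁ g : G₀, (M ⟶ act g N)) := by
  obtain ⟨e⟩ := hGFN
  -- Step 1: adjunction, as an additive equivalence (additivity via the inverse direction,
  -- which uses only that `F` is additive).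
  let e1 : (M ⟶ Gf.obj (F.obj N)) ≃+ (F.obj M ⟶ F.obj N) :=
    { toEquiv := (adj.homEquiv M (F.obj N)).symm
      map_add' := by
        intro f g
        show (adj.homEquiv M (F.obj N)).symm (f + g)
          = (adj.homEquiv M (F.obj N)).symm f + (adj.homEquiv M (F.obj N)).symm g
        rw [Adjunction.homEquiv_counit, Adjunction.homEquiv_counit, Adjunction.homEquiv_counit,
          F.map_add, Preadditive.add_comp] }
  -- Step 2: compose with the isomorphism `e`.
  let e2 : (M ⟶ Gf.obj (F.obj N)) ≃+ (M ⟶ ModuleCat.of R (⨁ g : G₀, (act g N : Type))) :=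
    { toFun := fun f => f ≫ e.hom
      invFun := fun f => f ≫ e.inv
      left_inv := fun f => by simp
      right_inv := fun f => by simp
      map_add' := fun f g => Preadditive.add_comp _ _ _ _ _ _ }
  -- Step 3: since `M` is finitely generated, `Hom(M, ⨁) ≃+ ⨁ Hom(M, -)`.
  haveI : Module.Finite R M := hM
  let e3 : (M ⟶ ModuleCat.of R (⨁ g : G₀, (act g N : Type))) ≃+ ⨁ g : G₀, (M ⟶ act g N) :=
    ModuleCat.homAddEquiv.trans ((dsHomEquiv (R := R) (ι := G₀) (M := M) (A := fun g => (act g N : Type))).trans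
      (DFinsupp.mapRange.addEquiv fun g => ModuleCat.homAddEquiv.symm))
  exact ⟨e1.symm.trans (e2.trans e3)⟩
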